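/- Let B be a self-adjoint operator on a Hilbert space H with spectral measure E, m > 0, and x ∈ D(|B|^m). Then for every k ≥ 1 and r > 0, ‖x - E([-r,r])x‖ ≤ (√(k+1) / (2^k r^m)) · sup_{0<τ≤π/r} ‖(e^{iτB} - I)^k |B|^m x‖. -/

import Mathlib

open MeasureTheory Complex Set Real intervalIntegral
open scoped ENNReal NNReal

noncomputable def Jf (β : ℝ) : ℝ := ∫ θ in (0:ℝ)..π, Real.cos (β*θ) * Real.sin θ

lemma J_eval {β : ℝ} (h1 : β ≠ 1) (h2 : β ≠ -1) :
    Jf β = (1 + Real.cos (β*π))/(1-β^2) := by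
  have hb1 : (1:ℝ) + β ≠ 0 := fun h => h2 (by linarith)
  have hb2 : (1:ℝ) - β ≠ 0 := fun h => h1 (by linarith)
  have key : ∀ θ ∈ Set.uIcc (0:ℝ) π, HasDerivAt
      (fun θ : ℝ => -(Real.cos ((1+β)*θ)/(1+β) + Real.cos ((1-β)*θ)/(1-β))/2)
      (Real.cos (β*θ) * Real.sin θ) θ := by
    intro θ _
    have c1 : HasDerivAt (fun θ : ℝ => Real.cos ((1+β)*θ)) (-Real.sin ((1+β)*θ) * (1+β)) θ := by
      simpa using ((hasDerivAt_id θ).const_mul (1+β)).cos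
    have c2 : HasDerivAt (fun θ : ℝ => Real.cos ((1-β)*θ)) (-Real.sin ((1-β)*θ) * (1-β)) θ := by
      simpa using ((hasDerivAt_id θ).const_mul (1-β)).cos
    have := (((c1.div_const (1+β)).add (c2.div_const (1-β))).neg).div_const 2
    refine this.congr_deriv ?_
    have e1 : (1+β)*θ = θ + β*θ := by ring
    have e2 : (1-β)*θ = θ - β*θ := by ring
    rw [e1, e2, Real.sin_add, Real.sin_sub]
    field_simp
    ring
  have := intervalIntegral.integral_eq_sub_of_hasDerivAt key (by
    apply Continuous.intervalIntegrable; continuity)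
  rw [Jf, this]
  have e1 : (1+β)*π = β*π + π := by ring
  have e2 : (1-β)*π = π - β*π := by ring
  rw [e1, e2, Real.cos_add_pi, Real.cos_pi_sub]
  have hb3 : (1:ℝ) - β^2 ≠ 0 := by
    intro h
    rcases mul_eq_zero.1 (show (1+β)*(1-β) = 0 by nlinarith) with h' | h'
    · exact hb1 h'
    · exact hb2 h'
  simp only [mul_zero, Real.cos_zero]
  field_simp
  ring

lemma J_one : Jf 1 = 0 := by
  have key : ∀ θ ∈ Set.uIcc (0:ℝ) π, HasDerivAt
      (fun θ : ℝ => Real.sin θ^2/2) (Real.cos (1*θ) * Real.sin θ) θ := by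
    intro θ _
    have := ((Real.hasDerivAt_sin θ).pow 2).div_const 2
    refine this.congr_deriv ?_
    simp
    ring
  have := intervalIntegral.integral_eq_sub_of_hasDerivAt key (by
    apply Continuous.intervalIntegrable; continuity)
  rw [Jf, this]; simp

lemma J_neg_one : Jf (-1) = 0 := by
  have : Jf (-1) = Jf 1 := by
    unfold Jf
    apply intervalIntegral.integral_congr
    intro θ _
    simp [Real.cos_neg]
  rw [this, J_one]

lemma J_nonpos {β : ℝ} (h : 1 < |β|) : Jf β ≤ 0 := by
  have h1 : β ≠ 1 := by rintro rfl; simp at h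
  have h2 : β ≠ -1 := by rintro rfl; simp at h
  rw [J_eval h1 h2]
  apply div_nonpos_of_nonneg_of_nonpos
  · nlinarith [Real.neg_one_le_cos (β*π)]
  · nlinarith [_root_.sq_abs β]

lemma cos_int_pi (n : ℤ) : Real.cos (n*π) = (-1)^n := by
  simpa using Real.cos_int_mul_pi_sub 0 n

lemma pair_ineq (a b : ℕ) {y : ℝ} (hy : 1 < y) :
    (-1:ℝ)^(a+b) * Jf ((a:ℝ)-b) ≤ (-1:ℝ)^(a+b) * Jf (((a:ℝ)-b)*y) := by
  rcases eq_or_ne a b with rfl | hne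
  · simp
  set j : ℤ := (a:ℤ) - b with hjdef
  have hj0 : j ≠ 0 := sub_ne_zero.2 (by exact_mod_cast hne)
  have hδ : ((a:ℝ) - b) = (j:ℝ) := by simp only [hjdef]; push_cast; ring
  clear_value j
  have habs : (1:ℝ) ≤ |(j:ℝ)| := by
    have : (1:ℤ) ≤ |j| := Int.one_le_abs hj0
    calc (1:ℝ) ≤ ((|j|:ℤ):ℝ) := by exact_mod_cast this
    _ = |(j:ℝ)| := by push_cast; ring
  have hy0 : (0:ℝ) < y := lt_trans one_pos hy
  have habsy : 1 < |(j:ℝ)*y| := by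
    rw [abs_mul, abs_of_pos hy0]; nlinarith
  have hnp := J_nonpos habsy
  have hyne1 : (j:ℝ)*y ≠ 1 := fun h => by rw [h] at habsy; simp at habsy
  have hyne2 : (j:ℝ)*y ≠ -1 := fun h => by rw [h] at habsy; simp at habsy
  rw [hδ]
  have hparity : Even j ↔ Even (a + b) := by
    rw [hjdef, Int.even_sub, Nat.even_add, Int.even_coe_nat, Int.even_coe_nat]
  rcases Int.even_or_odd j with hev | hodd
  · -- even case
    have hsign : (-1:ℝ)^(a+b) = 1 := (hparity.1 hev).neg_one_pow
    rw [hsign, one_mul, one_mul]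
    have h2 : (2:ℤ) ≤ |j| := by
      rcases hev with ⟨c, hc⟩
      rcases le_or_gt 0 j with h|h
      · rw [abs_of_nonneg h]; omega
      · rw [abs_of_neg h]; omega
    have h2r : (2:ℝ) ≤ |(j:ℝ)| := by
      calc (2:ℝ) ≤ ((|j|:ℤ):ℝ) := by exact_mod_cast h2
      _ = |(j:ℝ)| := by push_cast; ring
    have hne1 : (j:ℝ) ≠ 1 := fun h => by rw [h] at h2r; norm_num at h2r
    have hne2 : (j:ℝ) ≠ -1 := fun h => by rw [h] at h2r; norm_num at h2r
    rw [J_eval hne1 hne2, J_eval hyne1 hyne2]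
    have hcj : Real.cos ((j:ℝ)*π) = 1 := by rw [cos_int_pi]; exact hev.neg_one_zpow
    rw [hcj]
    have hA : (4:ℝ) ≤ (j:ℝ)^2 := by nlinarith [_root_.sq_abs (j:ℝ)]
    have e1 : (1:ℝ) + 1 = 2 := by norm_num
    rw [e1]
    have d1 : (1:ℝ) - (j:ℝ)^2 = -((j:ℝ)^2 - 1) := by ring
    have d2 : (1:ℝ) - ((j:ℝ)*y)^2 = -(((j:ℝ)*y)^2 - 1) := by ring
    rw [d1, d2, div_neg, div_neg, neg_le_neg_iff]
    have p1 : (0:ℝ) < (j:ℝ)^2 - 1 := by nlinarith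
    have p2 : (0:ℝ) < ((j:ℝ)*y)^2 - 1 := by nlinarith [_root_.sq_abs ((j:ℝ)*y)]
    rw [div_le_div_iff₀ p2 p1]
    have hc1 : Real.cos ((j:ℝ)*y*π) ≤ 1 := Real.cos_le_one _
    have hc2 : -1 ≤ Real.cos ((j:ℝ)*y*π) := Real.neg_one_le_cos _
    have hy2 : (1:ℝ) ≤ y^2 := by nlinarith
    have f1 : (1 + Real.cos ((j:ℝ)*y*π)) * ((j:ℝ)^2 - 1) ≤ 2 * ((j:ℝ)^2-1) := by nlinarith
    have f2 : (j:ℝ)^2 * 1 ≤ (j:ℝ)^2 * y^2 := by nlinarith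
    nlinarith
  · -- odd case
    have hsign : (-1:ℝ)^(a+b) = -1 := by
      have : ¬ Even (a+b) := fun h => (Int.not_even_iff_odd.2 hodd) (hparity.2 h)
      exact (Nat.not_even_iff_odd.1 this).neg_one_pow
    rw [hsign, neg_one_mul, neg_one_mul, neg_le_neg_iff]
    have hJ0 : Jf (j:ℝ) = 0 := by
      by_cases hj1 : j = 1
      · rw [hj1]; exact_mod_cast J_one
      by_cases hj2 : j = -1
      · rw [hj2]; exact_mod_cast J_neg_one
      · have hne1 : (j:ℝ) ≠ 1 := fun h => hj1 (by exact_mod_cast h)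
        have hne2 : (j:ℝ) ≠ -1 := fun h => hj2 (by exact_mod_cast h)
        rw [J_eval hne1 hne2, cos_int_pi, hodd.neg_one_zpow]
        norm_num
    rw [hJ0]
    exact hnp

lemma expansion (k : ℕ) (t : ℝ) :
    (2 - 2*Real.cos t)^k = ∑ a ∈ Finset.range (k+1), ∑ b ∈ Finset.range (k+1),
      ((k.choose a : ℝ) * (k.choose b) * (-1)^(a+b)) * Real.cos (((a:ℝ) - (b:ℝ)) * t) := by
  set c : ℕ → ℝ := fun a => (k.choose a : ℝ) * (-1)^a with hc
  set A : ℝ := ∑ a ∈ Finset.range (k+1), c a * Real.cos ((a:ℝ)*t) with hA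
  set B : ℝ := ∑ a ∈ Finset.range (k+1), c a * Real.sin ((a:ℝ)*t) with hB
  have h1 : ((1:ℂ) - Complex.exp (↑t*I))^k
      = ∑ a ∈ Finset.range (k+1), (↑(c a) : ℂ) * Complex.exp (↑((a:ℝ)*t)*I) := by
    rw [sub_eq_neg_add, add_pow]
    refine Finset.sum_congr rfl fun a ha => ?_
    rw [neg_pow, ← Complex.exp_nat_mul]
    rw [hc]
    push_cast
    ring_nf
  have h2 : Complex.normSq ((1:ℂ) - Complex.exp (↑t*I)) = 2 - 2*Real.cos t := by
    rw [Complex.normSq_apply]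
    simp [Complex.exp_ofReal_mul_I_re, Complex.exp_ofReal_mul_I_im]
    nlinarith [Real.sin_sq_add_cos_sq t]
  have h3 : ((2:ℝ) - 2*Real.cos t)^k = Complex.normSq (((1:ℂ) - Complex.exp (↑t*I))^k) := by
    rw [map_pow, h2]
  have hre : (((1:ℂ) - Complex.exp (↑t*I))^k).re = A := by
    rw [h1, Complex.re_sum, hA]
    refine Finset.sum_congr rfl fun a ha => ?_
    rw [Complex.re_ofReal_mul, Complex.exp_ofReal_mul_I_re]
  have him : (((1:ℂ) - Complex.exp (↑t*I))^k).im = B := by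
    rw [h1, Complex.im_sum, hB]
    refine Finset.sum_congr rfl fun a ha => ?_
    rw [Complex.im_ofReal_mul, Complex.exp_ofReal_mul_I_im]
  have h4 : ((2:ℝ) - 2*Real.cos t)^k = A^2 + B^2 := by
    rw [h3, Complex.normSq_apply, hre, him]; ring
  rw [h4]
  have hAA : A^2 = ∑ a ∈ Finset.range (k+1), ∑ b ∈ Finset.range (k+1),
      (c a * Real.cos ((a:ℝ)*t)) * (c b * Real.cos ((b:ℝ)*t)) := by
    rw [sq, hA, Finset.sum_mul_sum]
  have hBB : B^2 = ∑ a ∈ Finset.range (k+1), ∑ b ∈ Finset.range (k+1),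
      (c a * Real.sin ((a:ℝ)*t)) * (c b * Real.sin ((b:ℝ)*t)) := by
    rw [sq, hB, Finset.sum_mul_sum]
  rw [hAA, hBB, ← Finset.sum_add_distrib]
  refine Finset.sum_congr rfl fun a ha => ?_
  rw [← Finset.sum_add_distrib]
  refine Finset.sum_congr rfl fun b hb => ?_
  have : ((a:ℝ) - b) * t = (a:ℝ)*t - (b:ℝ)*t := by ring
  rw [this, Real.cos_sub, hc]
  rw [pow_add]
  ring

noncomputable def Phi (k : ℕ) (y : ℝ) : ℝ :=
  ∫ θ in (0:ℝ)..π, (2 - 2*Real.cos (y*θ))^k * Real.sin θ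

lemma Phi_expand (k : ℕ) (y : ℝ) : Phi k y
    = ∑ a ∈ Finset.range (k+1), ∑ b ∈ Finset.range (k+1),
      ((k.choose a : ℝ)*(k.choose b)) * ((-1:ℝ)^(a+b) * Jf (((a:ℝ)-(b:ℝ))*y)) := by
  unfold Phi
  have hpt : ∀ θ : ℝ, (2 - 2*Real.cos (y*θ))^k * Real.sin θ
      = ∑ a ∈ Finset.range (k+1), ∑ b ∈ Finset.range (k+1),
        ((k.choose a : ℝ) * (k.choose b) * (-1)^(a+b))
          * (Real.cos ((((a:ℝ)-(b:ℝ))*y)*θ) * Real.sin θ) := by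
    intro θ
    rw [expansion k (y*θ), Finset.sum_mul]
    refine Finset.sum_congr rfl fun a _ => ?_
    rw [Finset.sum_mul]
    refine Finset.sum_congr rfl fun b _ => ?_
    have : ((a:ℝ)-(b:ℝ))*(y*θ) = (((a:ℝ)-(b:ℝ))*y)*θ := by ring
    rw [this]
    ring
  rw [intervalIntegral.integral_congr (fun θ _ => hpt θ)]
  rw [intervalIntegral.integral_finset_sum (fun a _ => ?_)]
  · refine Finset.sum_congr rfl fun a _ => ?_
    rw [intervalIntegral.integral_finset_sum (fun b _ => ?_)]
    · refine Finset.sum_congr rfl fun b _ => ?_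
      rw [intervalIntegral.integral_const_mul, Jf]
      ring
    · apply Continuous.intervalIntegrable; continuity
  · apply Continuous.intervalIntegrable
    apply continuous_finset_sum
    intro b _
    continuity

lemma Phi_one (k : ℕ) : Phi k 1 = 2*4^k/((k:ℝ)+1) := by
  have key : ∀ θ ∈ Set.uIcc (0:ℝ) π, HasDerivAt
      (fun θ : ℝ => (2 - 2*Real.cos θ)^(k+1)/(2*((k:ℝ)+1)))
      ((2 - 2*Real.cos (1*θ))^k * Real.sin θ) θ := by
    intro θ _
    have hbase : HasDerivAt (fun θ : ℝ => 2 - 2*Real.cos θ) (2*Real.sin θ) θ := by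
      simpa using (((Real.hasDerivAt_cos θ).const_mul 2).const_sub 2)
    have := (hbase.pow (k+1)).div_const (2*((k:ℝ)+1))
    refine this.congr_deriv ?_
    simp only [one_mul]
    simp only [Nat.add_sub_cancel, Nat.cast_add, Nat.cast_one]
    field_simp
  have := intervalIntegral.integral_eq_sub_of_hasDerivAt key (by
    apply Continuous.intervalIntegrable; continuity)
  rw [Phi, this]
  rw [Real.cos_pi, Real.cos_zero]
  norm_num
  rw [pow_succ]
  have hk1 : ((k:ℝ)+1) ≠ 0 := by positivity
  field_simp
  ring
lemma Phi_mono (k : ℕ) {y : ℝ} (hy : 1 < y) : Phi k 1 ≤ Phi k y := by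
  rw [Phi_expand, Phi_expand]
  refine Finset.sum_le_sum fun a _ => ?_
  refine Finset.sum_le_sum fun b _ => ?_
  have hco : (0:ℝ) ≤ (k.choose a : ℝ)*(k.choose b) := by positivity
  refine mul_le_mul_of_nonneg_left ?_ hco
  have := pair_ineq a b hy
  simpa [mul_one] using this

lemma key_tau {k : ℕ} {r lam : ℝ} (hr : 0 < r) (hlam : r < |lam|) :
    4^k/((k:ℝ)+1) ≤ ∫ τ in (0:ℝ)..(π/r), (r/2 * Real.sin (r*τ)) * (2 - 2*Real.cos (τ*lam))^k := by
  have hrne : r ≠ 0 := ne_of_gt hr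
  set f : ℝ → ℝ := fun θ => (1/2 * Real.sin θ) * (2 - 2*Real.cos ((lam/r)*θ))^k with hf
  have hcongr : ∀ τ ∈ Set.uIcc (0:ℝ) (π/r),
      (r/2 * Real.sin (r*τ)) * (2 - 2*Real.cos (τ*lam))^k = r * f (r*τ) := by
    intro τ _
    simp only [hf]
    have : (lam/r)*(r*τ) = τ*lam := by field_simp
    rw [this]
    ring
  rw [intervalIntegral.integral_congr hcongr]
  have hint : (∫ τ in (0:ℝ)..(π/r), r * f (r*τ)) = r * ∫ τ in (0:ℝ)..(π/r), f (r*τ) := by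
    rw [intervalIntegral.integral_const_mul]
  rw [hint, intervalIntegral.integral_comp_mul_left f hrne]
  rw [mul_zero, mul_div_cancel₀ _ hrne]
  rw [smul_eq_mul, ← mul_assoc, mul_inv_cancel₀ hrne, one_mul]
  have habs : (∫ θ in (0:ℝ)..π, f θ) = (1/2) * Phi k (|lam|/r) := by
    rw [Phi, ← intervalIntegral.integral_const_mul]
    apply intervalIntegral.integral_congr
    intro θ _
    simp only [hf]
    beta_reduce
    rcases abs_cases lam with ⟨h, _⟩ | ⟨h, _⟩
    · rw [h]; ring
    · rw [h]
      have : (-lam/r)*θ = -((lam/r)*θ) := by ring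
      rw [this, Real.cos_neg]
      ring
  rw [habs]
  have hy : 1 < |lam|/r := (one_lt_div hr).2 hlam
  have := Phi_mono k hy
  rw [Phi_one] at this
  have hk1 : (0:ℝ) < (k:ℝ)+1 := by positivity
  calc (4:ℝ)^k/((k:ℝ)+1) = (1/2) * (2*4^k/((k:ℝ)+1)) := by field_simp
  _ ≤ (1/2) * Phi k (|lam|/r) := by linarith

lemma mass_one {r : ℝ} (hr : 0 < r) :
    (∫ τ in (0:ℝ)..(π/r), r/2 * Real.sin (r*τ)) = 1 := by
  have hrne : r ≠ 0 := ne_of_gt hr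
  have key : ∀ τ ∈ Set.uIcc (0:ℝ) (π/r), HasDerivAt
      (fun τ : ℝ => -(Real.cos (r*τ))/2) (r/2 * Real.sin (r*τ)) τ := by
    intro τ _
    have c1 : HasDerivAt (fun τ : ℝ => Real.cos (r*τ)) (-Real.sin (r*τ) * r) τ := by
      simpa using ((hasDerivAt_id τ).const_mul r).cos
    have := (c1.neg).div_const 2
    refine this.congr_deriv ?_
    ring
  have := intervalIntegral.integral_eq_sub_of_hasDerivAt key (by
    apply Continuous.intervalIntegrable; continuity)
  rw [this, mul_zero, Real.cos_zero, mul_div_cancel₀ _ hrne, Real.cos_pi]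
  norm_num

lemma w_nonneg {r : ℝ} (hr : 0 < r) {τ : ℝ} (hτ : τ ∈ Ioc (0:ℝ) (π/r)) :
    0 ≤ r/2 * Real.sin (r*τ) := by
  apply mul_nonneg (by positivity)
  apply Real.sin_nonneg_of_nonneg_of_le_pi
  · exact mul_nonneg hr.le (le_of_lt hτ.1)
  · have h2 : r*(π/r) = π := by field_simp
    calc r*τ ≤ r*(π/r) := mul_le_mul_of_nonneg_left hτ.2 hr.le
    _ = π := h2

lemma eLpNorm_two_eq {α : Type*} [MeasurableSpace α] (μ : Measure α) (f : α → ℂ) :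
    eLpNorm f 2 μ = (∫⁻ s, ((‖f s‖₊ : ℝ≥0∞))^2 ∂μ)^(1/2:ℝ) := by
  rw [eLpNorm_eq_lintegral_rpow_enorm_toReal (by norm_num) (by norm_num)]
  simp only [ENNReal.toReal_ofNat]
  congr 1
  · apply lintegral_congr
    intro s
    rw [← ENNReal.rpow_natCast]
    norm_num
    rfl

lemma eLpNorm_two_sq {α : Type*} [MeasurableSpace α] (μ : Measure α) (f : α → ℂ) :
    (eLpNorm f 2 μ)^2 = ∫⁻ s, ((‖f s‖₊ : ℝ≥0∞))^2 ∂μ := by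
  rw [eLpNorm_two_eq, ← ENNReal.rpow_natCast _ 2, ← ENNReal.rpow_mul]
  norm_num

lemma enn_norm_sq (z : ℂ) : ((‖z‖₊ : ℝ≥0∞))^2 = ENNReal.ofReal (‖z‖^2) := by
  rw [ENNReal.ofReal_pow (norm_nonneg _), ofReal_norm_eq_enorm]
  rfl

lemma norm_exp_sub_one_sq (θ : ℝ) : ‖Complex.exp (↑θ*I) - 1‖^2 = 2 - 2*Real.cos θ := by
  rw [Complex.sq_norm, Complex.normSq_apply]
  simp [Complex.exp_ofReal_mul_I_re, Complex.exp_ofReal_mul_I_im]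
  nlinarith [Real.sin_sq_add_cos_sq θ]

lemma ennreal_sq_rpow_half (z : ℝ≥0∞) : (z^2)^(1/2:ℝ) = z := by
  rw [← ENNReal.rpow_natCast z 2, ← ENNReal.rpow_mul]
  norm_num

/-- Corollary of the direct theorem for `G(λ) = |λ|^m`.  `B` is realized as multiplication
by the measurable function `b` on `L²(μ)`; `x ∈ D(|B|^m)` means that `|b|^m · x ∈ L²`.
Then `‖x - E([-r,r])x‖ ≤ (√(k+1)/(2^k r^m)) · sup_{0<τ≤π/r} ‖(e^{iτB}-I)^k |B|^m x‖`. -/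
theorem direct_theorem_power {X : Type*} [MeasurableSpace X] (μ : Measure X)
    (b : X → ℝ) (hb : Measurable b)
    (m : ℝ) (hm : 0 < m)
    (x : X → ℂ) (hx : MemLp x 2 μ)
    (hdom : MemLp (fun s => (|b s| ^ m : ℝ) * x s) 2 μ)
    (k : ℕ) (hk : 1 ≤ k) (r : ℝ) (hr : 0 < r) :
    eLpNorm (fun s => if |b s| ≤ r then 0 else x s) 2 μ
      ≤ ENNReal.ofReal (Real.sqrt (k + 1) / (2 ^ k * r ^ m)) *
        ⨆ τ ∈ Ioc (0 : ℝ) (π / r),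
          eLpNorm (fun s =>
            (Complex.exp (Complex.I * τ * b s) - 1) ^ k * ((|b s| ^ m : ℝ) * x s)) 2 μ := by
  have hT0 : 0 < π / r := div_pos Real.pi_pos hr
  have hrm : (0:ℝ) < r ^ m := Real.rpow_pos_of_pos hr m
  set S := ⨆ τ ∈ Ioc (0 : ℝ) (π / r),
      eLpNorm (fun s =>
        (Complex.exp (Complex.I * τ * b s) - 1) ^ k * ((|b s| ^ m : ℝ) * x s)) 2 μ with hSdef
  have hDpos : (0:ℝ) < Real.sqrt (k + 1) / (2 ^ k * r ^ m) := by
    apply div_pos (Real.sqrt_pos.2 (by positivity)) (by positivity)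
  rcases eq_top_or_lt_top S with hStop | hSfin
  · rw [hStop, ENNReal.mul_top (by simp [ENNReal.ofReal_eq_zero]; linarith)]
    exact le_top
  -- the measurable version of g
  obtain ⟨g', hg'sm, hgg'⟩ := hdom.aestronglyMeasurable
  have hg'm : Measurable g' := hg'sm.measurable
  set h' : X → ℝ≥0∞ := fun s => ((‖g' s‖₊ : ℝ≥0∞))^2 with hh'
  have hh'm : Measurable h' := by
    exact ((hg'm.nnnorm).coe_nnreal_ennreal).pow_const 2
  set ρ := μ.withDensity h' with hρdef
  haveI : IsFiniteMeasure ρ := by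
    constructor
    rw [hρdef, withDensity_apply _ MeasurableSet.univ, Measure.restrict_univ]
    have e1 : ∫⁻ s, h' s ∂μ = ∫⁻ s, ((‖(|b s| ^ m : ℝ) * x s‖₊ : ℝ≥0∞))^2 ∂μ := by
      apply lintegral_congr_ae
      filter_upwards [hgg'] with s hs
      rw [hh']
      simp only [hs]
    rw [e1, ← eLpNorm_two_sq]
    exact ENNReal.pow_lt_top hdom.2
  set E : Set X := {s | r < |b s|} with hE
  have hEm : MeasurableSet E := measurableSet_lt measurable_const hb.abs
  -- Step A2 : ofReal(r^m)^2 * L ≤ ρ E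
  set L := ∫⁻ s, ((‖if |b s| ≤ r then 0 else x s‖₊ : ℝ≥0∞))^2 ∂μ with hL
  have hA2 : (ENNReal.ofReal (r^m))^2 * L ≤ ρ E := by
    have step1 : (ENNReal.ofReal (r^m))^2 * L
        = ∫⁻ s, (ENNReal.ofReal (r^m))^2 * ((‖if |b s| ≤ r then 0 else x s‖₊ : ℝ≥0∞))^2 ∂μ := by
      rw [hL, lintegral_const_mul' _ _ (ENNReal.pow_ne_top ENNReal.ofReal_ne_top)]
    have step2 : ∀ s, (ENNReal.ofReal (r^m))^2 * ((‖if |b s| ≤ r then 0 else x s‖₊ : ℝ≥0∞))^2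
        ≤ E.indicator (fun s => ((‖(|b s| ^ m : ℝ) * x s‖₊ : ℝ≥0∞))^2) s := by
      intro s
      by_cases hbs : |b s| ≤ r
      · simp [hbs]
      · have hsE : s ∈ E := by simp [hE, not_le.1 hbs]
        rw [if_neg hbs, Set.indicator_of_mem hsE]
        have hnorm : ((‖(|b s| ^ m : ℝ) * x s‖₊ : ℝ≥0∞))
            = ENNReal.ofReal (|b s| ^ m) * (‖x s‖₊ : ℝ≥0∞) := by
          rw [nnnorm_mul, ENNReal.coe_mul]
          congr 1
          rw [← enorm_eq_nnnorm, ← ofReal_norm_eq_enorm, Complex.norm_real, Real.norm_eq_abs,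
            _root_.abs_of_nonneg (Real.rpow_nonneg (abs_nonneg _) m)]
        rw [hnorm, mul_pow]
        apply mul_le_mul_left
        apply pow_le_pow_left'
        apply ENNReal.ofReal_le_ofReal
        exact Real.rpow_le_rpow hr.le (not_le.1 hbs).le hm.le
    have step3 : ρ E = ∫⁻ s in E, ((‖(|b s| ^ m : ℝ) * x s‖₊ : ℝ≥0∞))^2 ∂μ := by
      rw [hρdef, withDensity_apply _ hEm]
      apply lintegral_congr_ae
      filter_upwards [ae_restrict_of_ae hgg'] with s hs
      rw [hh']
      simp only [hs]
    calc (ENNReal.ofReal (r^m))^2 * L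
        = ∫⁻ s, (ENNReal.ofReal (r^m))^2 * ((‖if |b s| ≤ r then 0 else x s‖₊ : ℝ≥0∞))^2 ∂μ := step1
      _ ≤ ∫⁻ s, E.indicator (fun s => ((‖(|b s| ^ m : ℝ) * x s‖₊ : ℝ≥0∞))^2) s ∂μ :=
          lintegral_mono step2
      _ = ∫⁻ s in E, ((‖(|b s| ^ m : ℝ) * x s‖₊ : ℝ≥0∞))^2 ∂μ := lintegral_indicator hEm _
      _ = ρ E := step3.symm
  -- kernel pieces
  set W : ℝ → ℝ≥0∞ := fun τ => ENNReal.ofReal (r/2 * Real.sin (r*τ)) with hW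
  set U : ℝ → X → ℝ≥0∞ := fun τ s => ENNReal.ofReal ((2 - 2*Real.cos (τ * b s))^k) with hU
  -- Step A3 : pointwise kernel lower bound
  have hA3 : ∀ s ∈ E, ENNReal.ofReal (4^k/((k:ℝ)+1))
      ≤ ∫⁻ τ in Ioc (0:ℝ) (π/r), W τ * U τ s ∂volume := by
    intro s hs
    have hs' : r < |b s| := hs
    have hcont : Continuous fun τ : ℝ => (r/2 * Real.sin (r*τ)) * (2 - 2*Real.cos (τ * b s))^k :=
      ((continuous_const.mul (Real.continuous_sin.comp (continuous_const.mul continuous_id))).mul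
        ((continuous_const.sub (continuous_const.mul (Real.continuous_cos.comp
          (continuous_id.mul continuous_const)))).pow k))
    have hInt : IntegrableOn (fun τ : ℝ => (r/2 * Real.sin (r*τ)) * (2 - 2*Real.cos (τ * b s))^k)
        (Ioc 0 (π/r)) volume := hcont.integrableOn_Ioc
    have hnn : 0 ≤ᵐ[volume.restrict (Ioc 0 (π/r))]
        fun τ => (r/2 * Real.sin (r*τ)) * (2 - 2*Real.cos (τ * b s))^k := by
      refine (ae_restrict_iff' measurableSet_Ioc).2 (ae_of_all _ fun τ hτ => ?_)
      apply mul_nonneg (w_nonneg hr hτ)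
      apply pow_nonneg
      nlinarith [Real.cos_le_one (τ * b s)]
    have heq := ofReal_integral_eq_lintegral_ofReal hInt hnn
    calc ENNReal.ofReal (4^k/((k:ℝ)+1))
        ≤ ENNReal.ofReal (∫ τ in Ioc (0:ℝ) (π/r),
            (r/2 * Real.sin (r*τ)) * (2 - 2*Real.cos (τ * b s))^k ∂volume) := by
          apply ENNReal.ofReal_le_ofReal
          rw [← intervalIntegral.integral_of_le hT0.le]
          exact key_tau hr hs'
      _ = ∫⁻ τ in Ioc (0:ℝ) (π/r),
            ENNReal.ofReal ((r/2 * Real.sin (r*τ)) * (2 - 2*Real.cos (τ * b s))^k) ∂volume := heq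
      _ = ∫⁻ τ in Ioc (0:ℝ) (π/r), W τ * U τ s ∂volume := by
          apply lintegral_congr_ae
          filter_upwards [ae_restrict_mem measurableSet_Ioc] with τ hτ
          rw [ENNReal.ofReal_mul (w_nonneg hr hτ)]
  -- measurability of U
  have hUm : ∀ τ : ℝ, Measurable (U τ) := by
    intro τ
    apply ENNReal.measurable_ofReal.comp
    exact (measurable_const.sub ((Real.measurable_cos.comp (hb.const_mul τ)).const_mul 2)).pow_const k
  -- Step A6 : per-τ bound
  have hA6 : ∀ τ ∈ Ioc (0:ℝ) (π/r), ∫⁻ s, U τ s ∂ρ ≤ S^2 := by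
    intro τ hτ
    have e1 : ∫⁻ s, U τ s ∂ρ = ∫⁻ s, (h' * U τ) s ∂μ := by
      rw [hρdef]
      exact lintegral_withDensity_eq_lintegral_mul μ hh'm (hUm τ)
    have e2 : ∀ s, (h' * U τ) s
        = ((‖(Complex.exp (Complex.I * τ * b s) - 1)^k * g' s‖₊ : ℝ≥0∞))^2 := by
      intro s
      have harg : ((τ * b s : ℝ) : ℂ) * Complex.I = Complex.I * τ * b s := by push_cast; ring
      have hre : ‖(Complex.exp (((τ * b s : ℝ):ℂ) * Complex.I) - 1)^k * g' s‖^2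
          = ‖g' s‖^2 * (2 - 2*Real.cos (τ * b s))^k := by
        rw [norm_mul, mul_pow, norm_pow, ← pow_mul, mul_comm k 2, pow_mul, norm_exp_sub_one_sq]
        ring
      simp only [Pi.mul_apply, hh', hU]
      rw [enn_norm_sq (g' s), ← ENNReal.ofReal_mul (sq_nonneg _), ← hre, ← enn_norm_sq, harg]
    have e3 : ∫⁻ s, (h' * U τ) s ∂μ
        = ∫⁻ s, ((‖(Complex.exp (Complex.I * τ * b s) - 1)^k * ((|b s| ^ m : ℝ) * x s)‖₊ : ℝ≥0∞))^2 ∂μ := by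
      rw [lintegral_congr e2]
      apply lintegral_congr_ae
      filter_upwards [hgg'] with s hs
      rw [← hs]
    have e4 : ∫⁻ s, ((‖(Complex.exp (Complex.I * τ * b s) - 1)^k * ((|b s| ^ m : ℝ) * x s)‖₊ : ℝ≥0∞))^2 ∂μ
        = (eLpNorm (fun s => (Complex.exp (Complex.I * τ * b s) - 1)^k * ((|b s| ^ m : ℝ) * x s)) 2 μ)^2 :=
      (eLpNorm_two_sq μ _).symm
    rw [e1, e3, e4]
    apply pow_le_pow_left'
    rw [hSdef]
    exact le_biSup (fun τ : ℝ => eLpNorm (fun s =>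
      (Complex.exp (Complex.I * τ * b s) - 1)^k * ((|b s| ^ m : ℝ) * x s)) 2 μ) hτ
  -- swap the order of integration
  have hswap : ∫⁻ s, (∫⁻ τ in Ioc (0:ℝ) (π/r), W τ * U τ s ∂volume) ∂ρ
      = ∫⁻ τ in Ioc (0:ℝ) (π/r), (∫⁻ s, W τ * U τ s ∂ρ) ∂volume := by
    apply lintegral_lintegral_swap
    apply Measurable.aemeasurable
    have m1 : Measurable fun p : X × ℝ => r/2 * Real.sin (r * p.2) :=
      (Real.measurable_sin.comp (measurable_snd.const_mul r)).const_mul (r/2)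
    have m2 : Measurable fun p : X × ℝ => (2 - 2*Real.cos (p.2 * b p.1))^k :=
      (measurable_const.sub ((Real.measurable_cos.comp
        (measurable_snd.mul (hb.comp measurable_fst))).const_mul 2)).pow_const k
    exact (ENNReal.measurable_ofReal.comp m1).mul (ENNReal.measurable_ofReal.comp m2)
  -- Step A7
  have hA7 : ∫⁻ τ in Ioc (0:ℝ) (π/r), (∫⁻ s, W τ * U τ s ∂ρ) ∂volume ≤ S^2 := by
    have hmono : ∫⁻ τ in Ioc (0:ℝ) (π/r), (∫⁻ s, W τ * U τ s ∂ρ) ∂volume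
        ≤ ∫⁻ τ in Ioc (0:ℝ) (π/r), W τ * S^2 ∂volume := by
      apply lintegral_mono_ae
      filter_upwards [ae_restrict_mem measurableSet_Ioc] with τ hτ
      rw [lintegral_const_mul' _ _ ENNReal.ofReal_ne_top]
      exact mul_le_mul_right (hA6 τ hτ) _
    have hWint : ∫⁻ τ in Ioc (0:ℝ) (π/r), W τ ∂volume = 1 := by
      have hInt : IntegrableOn (fun τ : ℝ => r/2 * Real.sin (r*τ)) (Ioc 0 (π/r)) volume :=
        ((continuous_const.mul (Real.continuous_sin.comp
          (continuous_const.mul continuous_id))) : Continuous fun τ : ℝ => r/2 * Real.sin (r*τ)).integrableOn_Ioc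
      have hnn : 0 ≤ᵐ[volume.restrict (Ioc 0 (π/r))] fun τ : ℝ => r/2 * Real.sin (r*τ) :=
        (ae_restrict_iff' measurableSet_Ioc).2 (ae_of_all _ fun τ hτ => w_nonneg hr hτ)
      rw [hW, ← ofReal_integral_eq_lintegral_ofReal hInt hnn,
        ← intervalIntegral.integral_of_le hT0.le, mass_one hr, ENNReal.ofReal_one]
    calc ∫⁻ τ in Ioc (0:ℝ) (π/r), (∫⁻ s, W τ * U τ s ∂ρ) ∂volume
        ≤ ∫⁻ τ in Ioc (0:ℝ) (π/r), W τ * S^2 ∂volume := hmono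
      _ = (∫⁻ τ in Ioc (0:ℝ) (π/r), W τ ∂volume) * S^2 :=
          lintegral_mul_const' _ _ (ENNReal.pow_ne_top hSfin.ne)
      _ = S^2 := by rw [hWint, one_mul]
  -- Step A4 : glue
  have hA4 : ENNReal.ofReal (4^k/((k:ℝ)+1)) * ρ E ≤ S^2 := by
    calc ENNReal.ofReal (4^k/((k:ℝ)+1)) * ρ E
        = ∫⁻ s, E.indicator (fun _ => ENNReal.ofReal (4^k/((k:ℝ)+1))) s ∂ρ :=
          (lintegral_indicator_const hEm _).symm
      _ ≤ ∫⁻ s, (∫⁻ τ in Ioc (0:ℝ) (π/r), W τ * U τ s ∂volume) ∂ρ := by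
          apply lintegral_mono
          intro s
          by_cases hsE : s ∈ E
          · rw [Set.indicator_of_mem hsE]; exact hA3 s hsE
          · rw [Set.indicator_of_notMem hsE]; exact zero_le
      _ = ∫⁻ τ in Ioc (0:ℝ) (π/r), (∫⁻ s, W τ * U τ s ∂ρ) ∂volume := hswap
      _ ≤ S^2 := hA7
  -- final assembly
  have hmain : ENNReal.ofReal (4^k/((k:ℝ)+1)) * ((ENNReal.ofReal (r^m))^2 * L) ≤ S^2 :=
    le_trans (mul_le_mul_right hA2 _) hA4
  set D := ENNReal.ofReal (Real.sqrt (k + 1) / (2 ^ k * r ^ m)) with hD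
  have hone : D^2 * (ENNReal.ofReal (4^k/((k:ℝ)+1)) * (ENNReal.ofReal (r^m))^2) = 1 := by
    rw [hD, ← ENNReal.ofReal_pow hDpos.le, ← ENNReal.ofReal_pow hrm.le,
      ← ENNReal.ofReal_mul (by positivity), ← ENNReal.ofReal_mul (by positivity)]
    have h1 : (Real.sqrt ((k:ℝ)+1))^2 = (k:ℝ)+1 := Real.sq_sqrt (by positivity)
    have h2 : ((2:ℝ)^k)^2 = 4^k := by
      rw [← pow_mul, mul_comm, pow_mul]
      norm_num
    have h3 : (Real.sqrt ((k:ℝ)+1) / (2 ^ k * r ^ m))^2 * (4^k/((k:ℝ)+1) * (r^m)^2) = 1 := by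
      rw [div_pow, h1, mul_pow, h2]
      have hk1 : ((k:ℝ)+1) ≠ 0 := by positivity
      have h4k : ((4:ℝ)^k) ≠ 0 := by positivity
      have hrm' : (r^m) ≠ 0 := ne_of_gt hrm
      field_simp
    rw [h3, ENNReal.ofReal_one]
  have hLle : L ≤ D^2 * S^2 := by
    calc L = (D^2 * (ENNReal.ofReal (4^k/((k:ℝ)+1)) * (ENNReal.ofReal (r^m))^2)) * L := by
          rw [hone, one_mul]
      _ = D^2 * (ENNReal.ofReal (4^k/((k:ℝ)+1)) * ((ENNReal.ofReal (r^m))^2 * L)) := by ring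
      _ ≤ D^2 * S^2 := mul_le_mul_right hmain _
  rw [eLpNorm_two_eq μ _, ← hL]
  calc L^(1/2:ℝ) ≤ ((D*S)^2)^(1/2:ℝ) := by
        apply ENNReal.rpow_le_rpow _ (by norm_num)
        rw [mul_pow]
        exact hLle
    _ = D*S := ennreal_sq_rpow_half _
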